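/- (Corollary C.4, irrelevant features annihilated by the min-norm solution matrix.) In the structured contrastive dataset, for every k with 3 ≤ k ≤ K one has v_kᵀ M† M⁺ M† v_k = 0; equivalently, every real matrix W with WᵀW = M† M⁺ M† satisfies W v_k = 0 for all 3 ≤ k ≤ K. -/

import Mathlib

open Matrix

/-- The contrastive trace loss `Tr(-2 WᵀW P + WᵀW M WᵀW M)`. -/
noncomputable def CLTraceLoss {p D : ℕ} (P M : Matrix (Fin D) (Fin D) ℝ)
    (W : Matrix (Fin p) (Fin D) ℝ) : ℝ :=
  Matrix.trace ((-2 : ℝ) • (Wᵀ * W * P) + Wᵀ * W * M * (Wᵀ * W) * M)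

/-- `Ad` is the Moore–Penrose pseudoinverse of `A`. -/
def IsPseudoinverse {N : ℕ} (A Ad : Matrix (Fin N) (Fin N) ℝ) : Prop :=
  A * Ad * A = A ∧ Ad * A * Ad = Ad ∧ (A * Ad)ᵀ = A * Ad ∧ (Ad * A)ᵀ = Ad * A

section AuxVMV
variable {D : ℕ}

lemma vmv_mulVec (a b x : Fin D → ℝ) : (vecMulVec a b).mulVec x = (b ⬝ᵥ x) • a := by
  ext i
  simp only [mulVec, dotProduct, vecMulVec_apply, Pi.smul_apply, smul_eq_mul,
    Finset.sum_mul]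
  exact Finset.sum_congr rfl (fun t _ => by ring)

lemma vmv_mul_vmv (a b c d : Fin D → ℝ) :
    vecMulVec a b * vecMulVec c d = (b ⬝ᵥ c) • vecMulVec a d := by
  ext i j
  simp only [mul_apply, vecMulVec_apply, Matrix.smul_apply, dotProduct, smul_eq_mul]
  rw [Finset.sum_mul]
  exact Finset.sum_congr rfl (fun t _ => by ring)

lemma smul_vmv (c : ℝ) (a b : Fin D → ℝ) :
    vecMulVec (c • a) b = c • vecMulVec a b := by
  ext i j; simp [vecMulVec_apply]; ring

lemma vmv_transpose (a b : Fin D → ℝ) : (vecMulVec a b)ᵀ = vecMulVec b a := by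
  ext i j; simp [vecMulVec_apply, mul_comm]

lemma mul_vmv (A : Matrix (Fin D) (Fin D) ℝ) (a b : Fin D → ℝ) :
    A * vecMulVec a b = vecMulVec (A.mulVec a) b := by
  ext i j
  simp only [mul_apply, vecMulVec_apply, mulVec, dotProduct, Finset.sum_mul]
  exact Finset.sum_congr rfl (fun t _ => by ring)

lemma vmv_mul (B : Matrix (Fin D) (Fin D) ℝ) (a b : Fin D → ℝ) :
    vecMulVec a b * Bᵀ = vecMulVec a (B.mulVec b) := by
  ext i j
  simp only [mul_apply, vecMulVec_apply, transpose_apply, mulVec, dotProduct,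
    Finset.mul_sum]
  exact Finset.sum_congr rfl (fun t _ => by ring)

lemma conj_vmv' (A B : Matrix (Fin D) (Fin D) ℝ) (a b : Fin D → ℝ) :
    A * vecMulVec a b * B = vecMulVec (A.mulVec a) (Bᵀ.mulVec b) := by
  rw [mul_vmv]
  conv_lhs => rw [← transpose_transpose B, vmv_mul]

end AuxVMV

section Pinv
variable {N : ℕ}

lemma pinv_unique (A B C : Matrix (Fin N) (Fin N) ℝ)
    (hB : IsPseudoinverse A B) (hC : IsPseudoinverse A C) : B = C := by
  obtain ⟨b1, b2, b3, b4⟩ := hB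
  obtain ⟨c1, c2, c3, c4⟩ := hC
  have e1 : Aᵀ = Aᵀ * (A * C) := by
    conv_lhs => rw [← c1]
    rw [transpose_mul, c3]
  have hAB : A * B = A * C := by
    calc A * B = (A * B)ᵀ := b3.symm
    _ = Bᵀ * Aᵀ := by rw [transpose_mul]
    _ = Bᵀ * (Aᵀ * (A * C)) := by rw [← e1]
    _ = (Bᵀ * Aᵀ) * (A * C) := by rw [Matrix.mul_assoc]
    _ = (A * B)ᵀ * (A * C) := by rw [transpose_mul]
    _ = (A * B) * (A * C) := by rw [b3]
    _ = (A * B * A) * C := by simp only [Matrix.mul_assoc]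
    _ = A * C := by rw [b1]
  have e2 : Aᵀ = (C * A) * Aᵀ := by
    conv_lhs => rw [← c1]
    rw [Matrix.mul_assoc, transpose_mul, c4]
  have hBA : B * A = C * A := by
    calc B * A = (B * A)ᵀ := b4.symm
    _ = Aᵀ * Bᵀ := by rw [transpose_mul]
    _ = ((C * A) * Aᵀ) * Bᵀ := by rw [← e2]
    _ = (C * A) * (Aᵀ * Bᵀ) := by rw [Matrix.mul_assoc]
    _ = (C * A) * (B * A)ᵀ := by rw [transpose_mul]
    _ = (C * A) * (B * A) := by rw [b4]
    _ = C * (A * B * A) := by simp only [Matrix.mul_assoc]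
    _ = C * A := by rw [b1]
  calc B = B * A * B := b2.symm
  _ = (C * A) * B := by rw [hBA]
  _ = C * (A * B) := by rw [Matrix.mul_assoc]
  _ = C * (A * C) := by rw [hAB]
  _ = C * A * C := by rw [Matrix.mul_assoc]
  _ = C := c2

lemma pinv_conj (A Ad R : Matrix (Fin N) (Fin N) ℝ) (h : IsPseudoinverse A Ad)
    (hR : R * R = 1) (hRT : Rᵀ = R) : IsPseudoinverse (R * A * R) (R * Ad * R) := by
  obtain ⟨a1, a2, a3, a4⟩ := h
  have hm : ∀ X Z : Matrix (Fin N) (Fin N) ℝ, (R * X * R) * (R * Z * R) = R * (X * Z) * R := by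
    intro X Z
    have h1 : (R * X * R) * (R * Z * R) = R * (X * ((R * R) * (Z * R))) := by
      simp only [Matrix.mul_assoc]
    rw [h1, hR, Matrix.one_mul]
    simp only [Matrix.mul_assoc]
  have ht : ∀ X : Matrix (Fin N) (Fin N) ℝ, (R * X * R)ᵀ = R * Xᵀ * R := by
    intro X
    rw [transpose_mul, transpose_mul, hRT, Matrix.mul_assoc]
  refine ⟨?_, ?_, ?_, ?_⟩
  · rw [hm, hm, a1]
  · rw [hm, hm, a2]
  · rw [hm, ht, a3]
  · rw [hm, ht, a4]

end Pinv

section Refl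
variable {ι : Type*} [Fintype ι] [DecidableEq ι] {D : ℕ}

omit [DecidableEq ι] in
lemma sum_mulVec' {A : ι → Matrix (Fin D) (Fin D) ℝ} (x : Fin D → ℝ) :
    (∑ i, A i).mulVec x = ∑ i, (A i).mulVec x := by
  ext t
  simp only [Matrix.mulVec, dotProduct, Finset.sum_apply, Matrix.sum_apply,
    Finset.sum_mul]
  rw [Finset.sum_comm]

omit [DecidableEq ι] in
lemma mulVec_sum' (A : Matrix (Fin D) (Fin D) ℝ) (z : ι → Fin D → ℝ) :
    A.mulVec (∑ i, z i) = ∑ i, A.mulVec (z i) := by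
  ext t
  simp only [Matrix.mulVec, dotProduct, Finset.sum_apply, Finset.mul_sum]
  rw [Finset.sum_comm]

noncomputable def reflMat (w : ι → Fin D → ℝ) (g : ι → ι) (ε : ι → ℝ) :
    Matrix (Fin D) (Fin D) ℝ :=
  1 + ∑ i, vecMulVec (ε i • w (g i) - w i) (w i)

variable (w : ι → Fin D → ℝ) (g : ι → ι) (ε : ι → ℝ)
variable (hw : ∀ i j, w i ⬝ᵥ w j = if i = j then (1:ℝ) else 0)
variable (hg : Function.Involutive g)
variable (hε1 : ∀ i, ε i * ε (g i) = 1) (hε2 : ∀ i, ε (g i) = ε i)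

omit [DecidableEq ι] in
lemma reflMat_mulVec (x : Fin D → ℝ) : (reflMat w g ε).mulVec x
    = x + ∑ i, (w i ⬝ᵥ x) • (ε i • w (g i) - w i) := by
  unfold reflMat
  rw [add_mulVec, one_mulVec, sum_mulVec']
  congr 1
  exact Finset.sum_congr rfl fun i _ => vmv_mulVec _ _ _

omit [DecidableEq ι] in
include hg hε2 in
lemma reflMat_transpose : (reflMat w g ε)ᵀ = reflMat w g ε := by
  unfold reflMat
  rw [transpose_add, transpose_one, transpose_sum]
  congr 1
  have rhs_eq : ∀ i : ι, vecMulVec (ε i • w (g i) - w i) (w i)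
      = ε i • vecMulVec (w (g i)) (w i) - vecMulVec (w i) (w i) := by
    intro i; ext a b; simp [vecMulVec_apply]; ring
  simp only [rhs_eq, transpose_sub, transpose_smul, vmv_transpose]
  rw [Finset.sum_sub_distrib, Finset.sum_sub_distrib]
  congr 1
  rw [← Equiv.sum_comp (hg.toPerm g) (fun j => ε j • vecMulVec (w j) (w (g j)))]
  apply Finset.sum_congr rfl
  intro i _
  simp only [Function.Involutive.coe_toPerm, hg i, hε2 i]

include hw hg hε1 hε2 in
lemma reflMat_mul_self : reflMat w g ε * reflMat w g ε = 1 := by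
  unfold reflMat
  set u : ι → Fin D → ℝ := fun i => ε i • w (g i) - w i with hu
  set C : Matrix (Fin D) (Fin D) ℝ := ∑ i, vecMulVec (u i) (w i) with hC
  have hCC : C * C = (-2 : ℝ) • C := by
    rw [hC, Finset.sum_mul]
    have step : ∀ i : ι, (vecMulVec (u i) (w i)) * ∑ j, vecMulVec (u j) (w j)
        = ∑ j, (w i ⬝ᵥ u j) • vecMulVec (u i) (w j) := by
      intro i
      rw [Finset.mul_sum]
      exact Finset.sum_congr rfl fun j _ => vmv_mul_vmv _ _ _ _
    simp only [step]
    rw [Finset.sum_comm]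
    have inner : ∀ j : ι, ∑ i, (w i ⬝ᵥ u j) • vecMulVec (u i) (w j)
        = (-2 : ℝ) • vecMulVec (u j) (w j) := by
      intro j
      have hdot : ∀ i, w i ⬝ᵥ u j
          = ε j * (if i = g j then 1 else 0) - (if i = j then 1 else 0) := by
        intro i
        have : u j = ε j • w (g j) - w j := rfl
        rw [this]
        simp only [dotProduct_sub, dotProduct_smul, smul_eq_mul, hw]
      have split : ∀ i : ι, (w i ⬝ᵥ u j) • vecMulVec (u i) (w j)
          = (if i = g j then ε j • vecMulVec (u i) (w j) else 0)
            - (if i = j then vecMulVec (u i) (w j) else 0) := by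
        intro i
        rw [hdot]
        split_ifs <;> simp [sub_smul]
      rw [Finset.sum_congr rfl fun i _ => split i]
      rw [Finset.sum_sub_distrib, Finset.sum_ite_eq', Finset.sum_ite_eq']
      simp only [Finset.mem_univ, if_true]
      have hεj : ε j * ε j = 1 := by
        have := hε1 j; rw [hε2 j] at this; exact this
      have hugj : ε j • u (g j) = -u j := by
        have h1 : u (g j) = ε (g j) • w (g (g j)) - w (g j) := rfl
        have h2 : u j = ε j • w (g j) - w j := rfl
        rw [h1, h2, hg j, hε2 j]
        ext t
        simp only [Pi.smul_apply, Pi.sub_apply, Pi.neg_apply, smul_eq_mul]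
        have : ε j * (ε j * w j t) = w j t := by
          rw [← mul_assoc, hεj, one_mul]
        rw [mul_sub, this]
        ring
      rw [← smul_vmv, hugj]
      ext a b
      simp only [Matrix.sub_apply, Matrix.smul_apply, vecMulVec_apply, Pi.neg_apply,
        smul_eq_mul, neg_mul]
      ring
    rw [Finset.sum_congr rfl fun j _ => inner j, ← Finset.smul_sum]
  rw [add_mul, Matrix.one_mul, mul_add, Matrix.mul_one, hCC]
  ext a b
  simp only [Matrix.add_apply, Matrix.smul_apply, Matrix.one_apply, smul_eq_mul]
  split_ifs <;> ring

end Refl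

lemma exists_flip_perm (N : ℕ) (y ysub ρ : Fin N → ℝ) (κ : Fin N → ℕ) (k : ℕ)
    (hρ : ∀ i, ρ i = 1 ∨ ρ i = -1)
    (hcardeq : ∀ a b : ℝ,
      ({i : Fin N | y i = a ∧ ysub i = b ∧ κ i = k ∧ ρ i = 1}).ncard
        = ({i : Fin N | y i = a ∧ ysub i = b ∧ κ i = k ∧ ρ i = -1}).ncard) :
    ∃ f : Fin N → Fin N, Function.Involutive f ∧ (∀ i, y (f i) = y i)
      ∧ (∀ i, ysub (f i) = ysub i)
      ∧ (∀ i, κ i = k → κ (f i) = k ∧ ρ (f i) = -ρ i)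
      ∧ (∀ i, κ i ≠ k → f i = i) := by
  classical
  set S : ℝ × ℝ → ℝ → Finset (Fin N) := fun a r =>
    Finset.univ.filter (fun i => (y i, ysub i) = a ∧ κ i = k ∧ ρ i = r) with hS
  have hmem : ∀ a r i, i ∈ S a r ↔ ((y i, ysub i) = a ∧ κ i = k ∧ ρ i = r) := by
    intro a r i
    rw [hS]
    simp [Finset.mem_filter]
  have hcard : ∀ a, (S a 1).card = (S a (-1)).card := by
    intro a
    have h1 : ((S a 1 : Finset (Fin N)) : Set (Fin N))
        = {i : Fin N | y i = a.1 ∧ ysub i = a.2 ∧ κ i = k ∧ ρ i = 1} := by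
      ext i
      simp only [Set.mem_setOf_eq, Finset.mem_coe, hmem, Prod.ext_iff]
      tauto
    have h2 : ((S a (-1) : Finset (Fin N)) : Set (Fin N))
        = {i : Fin N | y i = a.1 ∧ ysub i = a.2 ∧ κ i = k ∧ ρ i = -1} := by
      ext i
      simp only [Set.mem_setOf_eq, Finset.mem_coe, hmem, Prod.ext_iff]
      tauto
    rw [← Set.ncard_coe_finset, ← Set.ncard_coe_finset, h1, h2]
    exact hcardeq a.1 a.2
  have e : ∀ a, {i // i ∈ S a 1} ≃ {i // i ∈ S a (-1)} :=
    fun a => Finset.equivOfCardEq (hcard a)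
  set f : Fin N → Fin N := fun i =>
    if h : κ i = k ∧ ρ i = 1 then
      ((e (y i, ysub i)) ⟨i, (hmem _ _ _).mpr ⟨rfl, h.1, h.2⟩⟩).val
    else if h' : κ i = k ∧ ρ i = -1 then
      ((e (y i, ysub i)).symm ⟨i, (hmem _ _ _).mpr ⟨rfl, h'.1, h'.2⟩⟩).val
    else i
    with hf
  have hone : (1 : ℝ) ≠ -1 := by norm_num
  have hf1 : ∀ a i (h : i ∈ S a 1), f i = ((e a) ⟨i, h⟩).val := by
    intro a i h
    obtain ⟨hpair, hik, hir⟩ := (hmem a 1 i).mp h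
    subst hpair
    simp only [hf]
    rw [dif_pos ⟨hik, hir⟩]
  have hf2 : ∀ a i (h : i ∈ S a (-1)), f i = ((e a).symm ⟨i, h⟩).val := by
    intro a i h
    obtain ⟨hpair, hik, hir⟩ := (hmem a (-1) i).mp h
    subst hpair
    simp only [hf]
    rw [dif_neg (fun hc => by rw [hc.2] at hir; exact hone hir), dif_pos ⟨hik, hir⟩]
  have hf3 : ∀ i, κ i ≠ k → f i = i := by
    intro i h
    simp only [hf]
    rw [dif_neg (fun hc => h hc.1), dif_neg (fun hc => h hc.1)]
  have hprop1 : ∀ i, κ i = k → ρ i = 1 →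
      (y (f i), ysub (f i)) = (y i, ysub i) ∧ κ (f i) = k ∧ ρ (f i) = -1 := by
    intro i h1 h2
    have hm : i ∈ S (y i, ysub i) 1 := (hmem _ _ _).mpr ⟨rfl, h1, h2⟩
    rw [hf1 _ i hm]
    exact (hmem _ _ _).mp ((e (y i, ysub i)) ⟨i, hm⟩).2
  have hprop2 : ∀ i, κ i = k → ρ i = -1 →
      (y (f i), ysub (f i)) = (y i, ysub i) ∧ κ (f i) = k ∧ ρ (f i) = 1 := by
    intro i h1 h2
    have hm : i ∈ S (y i, ysub i) (-1) := (hmem _ _ _).mpr ⟨rfl, h1, h2⟩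
    rw [hf2 _ i hm]
    exact (hmem _ _ _).mp ((e (y i, ysub i)).symm ⟨i, hm⟩).2
  have hinv : Function.Involutive f := by
    intro i
    by_cases hik : κ i = k
    · rcases hρ i with h2 | h2
      · have hm : i ∈ S (y i, ysub i) 1 := (hmem _ _ _).mpr ⟨rfl, hik, h2⟩
        rw [hf1 _ i hm, hf2 (y i, ysub i) _ ((e (y i, ysub i)) ⟨i, hm⟩).2]
        rw [Subtype.eta]
        rw [Equiv.symm_apply_apply]
      · have hm : i ∈ S (y i, ysub i) (-1) := (hmem _ _ _).mpr ⟨rfl, hik, h2⟩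
        rw [hf2 _ i hm, hf1 (y i, ysub i) _ ((e (y i, ysub i)).symm ⟨i, hm⟩).2]
        rw [Subtype.eta]
        rw [Equiv.apply_symm_apply]
    · rw [hf3 i hik, hf3 i hik]
  have hy' : ∀ i, y (f i) = y i := by
    intro i
    by_cases hik : κ i = k
    · rcases hρ i with h2 | h2
      · exact congrArg Prod.fst (hprop1 i hik h2).1
      · exact congrArg Prod.fst (hprop2 i hik h2).1
    · rw [hf3 i hik]
  have hysub' : ∀ i, ysub (f i) = ysub i := by
    intro i
    by_cases hik : κ i = k
    · rcases hρ i with h2 | h2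
      · exact congrArg Prod.snd (hprop1 i hik h2).1
      · exact congrArg Prod.snd (hprop2 i hik h2).1
    · rw [hf3 i hik]
  refine ⟨f, hinv, hy', hysub', ?_, hf3⟩
  intro i hik
  rcases hρ i with h2 | h2
  · refine ⟨(hprop1 i hik h2).2.1, ?_⟩
    rw [(hprop1 i hik h2).2.2, h2]
  · refine ⟨(hprop2 i hik h2).2.1, ?_⟩
    rw [(hprop2 i hik h2).2.2, h2]
    norm_num

theorem stmt_13
    (m K n D : ℕ)
    (hm : 1 ≤ m) (hK : 3 ≤ K) (hn : 1 ≤ n) (hdiv : 8 * (K - 2) ∣ n)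
    (hD : K + 1 + m * n ≤ D)
    (φ : ℕ → ℝ) (hφ : ∀ j, 1 ≤ j → j ≤ K → 0 < φ j)
    (μ σξ : ℝ) (hσ : 0 < σξ)
    (v : ℕ → Fin D → ℝ)
    (hortho : ∀ i j, i ≤ K + m * n → j ≤ K + m * n →
      (∑ t, v i t * v j t) = if i = j then (1 : ℝ) else 0)
    (y ysub ρ : Fin (m * n) → ℝ) (κ : Fin (m * n) → ℕ)
    (hy : ∀ i, y i = 1 ∨ y i = -1)
    (hysub : ∀ i, ysub i = 1 ∨ ysub i = -1)
    (hρ : ∀ i, ρ i = 1 ∨ ρ i = -1)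
    (hκ : ∀ i, 3 ≤ κ i ∧ κ i ≤ K)
    (hblock : ∀ i j : Fin (m * n), i.1 / m = j.1 / m →
      y i = y j ∧ ysub i = ysub j ∧ κ i = κ j ∧ ρ i = ρ j)
    (hbal : ∀ (a b r : ℝ) (c : ℕ), (a = 1 ∨ a = -1) → (b = 1 ∨ b = -1) →
      (r = 1 ∨ r = -1) → 3 ≤ c → c ≤ K →
      Set.ncard {i : Fin (m * n) | y i = a ∧ ysub i = b ∧ κ i = c ∧ ρ i = r}
        = m * n / (8 * (K - 2)))
    (x : Fin (m * n) → Fin D → ℝ)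
    (hx : ∀ i, x i = fun t => v 0 t + y i * φ 1 * v 1 t + (ysub i * φ 2 + μ) * v 2 t
      + ρ i * φ (κ i) * v (κ i) t + σξ * v (K + 1 + i.1) t)
    (M Mp : Matrix (Fin D) (Fin D) ℝ)
    (hM : M = ((m * n : ℝ))⁻¹ • ∑ i, Matrix.vecMulVec (x i) (x i))
    (xbar : ℝ → Fin D → ℝ)
    (hxbar : ∀ ε, xbar ε = (2 / (m * n : ℝ)) •
      ∑ i, Set.indicator {j : Fin (m * n) | y j = ε} x i)
    (hMp : Mp = (2 : ℝ)⁻¹ • (Matrix.vecMulVec (xbar 1) (xbar 1)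
      + Matrix.vecMulVec (xbar (-1)) (xbar (-1))))
    (Md : Matrix (Fin D) (Fin D) ℝ) (hMd : IsPseudoinverse M Md) :
    (∀ k, 3 ≤ k → k ≤ K → (v k) ⬝ᵥ (Md * Mp * Md).mulVec (v k) = 0) ∧
    ∀ (q : ℕ) (W : Matrix (Fin q) (Fin D) ℝ),
      Wᵀ * W = Md * Mp * Md → ∀ k, 3 ≤ k → k ≤ K → W.mulVec (v k) = 0 := by
  classical
  -- M is symmetric
  have hMsym : Mᵀ = M := by
    rw [hM, transpose_smul, transpose_sum]
    congr 1
    exact Finset.sum_congr rfl fun i _ => vmv_transpose _ _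
  -- Md is symmetric
  have hMdsym : Mdᵀ = Md := by
    have h1 : M * Mdᵀ * M = M := by
      have ht : (M * Mdᵀ * M)ᵀ = M := by
        rw [transpose_mul, transpose_mul, transpose_transpose, hMsym,
          ← Matrix.mul_assoc]
        exact hMd.1
      calc M * Mdᵀ * M = ((M * Mdᵀ * M)ᵀ)ᵀ := (transpose_transpose _).symm
      _ = Mᵀ := by rw [ht]
      _ = M := hMsym
    have h2 : Mdᵀ * M * Mdᵀ = Mdᵀ := by
      have ht : (Mdᵀ * M * Mdᵀ)ᵀ = Md := by
        rw [transpose_mul, transpose_mul, transpose_transpose, hMsym,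
          ← Matrix.mul_assoc]
        exact hMd.2.1
      calc Mdᵀ * M * Mdᵀ = ((Mdᵀ * M * Mdᵀ)ᵀ)ᵀ := (transpose_transpose _).symm
      _ = Mdᵀ := by rw [ht]
    have h3 : (M * Mdᵀ)ᵀ = M * Mdᵀ := by
      have e1 : (M * Mdᵀ)ᵀ = Md * M := by
        rw [transpose_mul, transpose_transpose, hMsym]
      have e2 : M * Mdᵀ = Md * M := by
        calc M * Mdᵀ = Mᵀ * Mdᵀ := by conv_lhs => rw [← hMsym]
        _ = (Md * M)ᵀ := by rw [transpose_mul]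
        _ = Md * M := hMd.2.2.2
      rw [e1, e2]
    have h4 : (Mdᵀ * M)ᵀ = Mdᵀ * M := by
      have e1 : (Mdᵀ * M)ᵀ = M * Md := by
        rw [transpose_mul, transpose_transpose, hMsym]
      have e2 : Mdᵀ * M = M * Md := by
        calc Mdᵀ * M = Mdᵀ * Mᵀ := by conv_lhs => rw [← hMsym]
        _ = (M * Md)ᵀ := by rw [transpose_mul]
        _ = M * Md := hMd.2.2.1
      rw [e1, e2]
    exact pinv_unique M Mdᵀ Md ⟨h1, h2, h3, h4⟩ hMd
  -- dot product against a symmetric matrix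
  have symdot : ∀ (A : Matrix (Fin D) (Fin D) ℝ), Aᵀ = A →
      ∀ (u z : Fin D → ℝ), u ⬝ᵥ A.mulVec z = A.mulVec u ⬝ᵥ z := by
    intro A hA u z
    calc u ⬝ᵥ A.mulVec z = (u ᵥ* A) ⬝ᵥ z := dotProduct_mulVec u A z
    _ = (Aᵀ.mulVec u) ⬝ᵥ z := by
        conv_lhs => rw [← transpose_transpose A, vecMul_transpose]
    _ = (A.mulVec u) ⬝ᵥ z := by rw [hA]
  -- the key orthogonality
  have key : ∀ k, 3 ≤ k → k ≤ K → ∀ ε : ℝ, v k ⬝ᵥ Md.mulVec (xbar ε) = 0 := by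
    intro k hk3 hkK ε
    have hcardeq : ∀ a b : ℝ,
        ({i : Fin (m*n) | y i = a ∧ ysub i = b ∧ κ i = k ∧ ρ i = 1}).ncard
          = ({i : Fin (m*n) | y i = a ∧ ysub i = b ∧ κ i = k ∧ ρ i = -1}).ncard := by
      intro a b
      by_cases ha : (a = 1 ∨ a = -1) ∧ (b = 1 ∨ b = -1)
      · rw [hbal a b 1 k ha.1 ha.2 (Or.inl rfl) hk3 hkK,
          hbal a b (-1) k ha.1 ha.2 (Or.inr rfl) hk3 hkK]
      · have hemp : ∀ r : ℝ,
            {i : Fin (m*n) | y i = a ∧ ysub i = b ∧ κ i = k ∧ ρ i = r} = ∅ := by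
          intro r
          ext i
          simp only [Set.mem_setOf_eq, Set.mem_empty_iff_false, iff_false]
          rintro ⟨h1, h2, _, _⟩
          exact ha ⟨h1 ▸ hy i, h2 ▸ hysub i⟩
        rw [hemp 1, hemp (-1)]
    obtain ⟨f, hfinv, hfy, hfysub, hfκ, hfid⟩ :=
      exists_flip_perm (m*n) y ysub ρ κ k hρ hcardeq
    -- index family on Option (Fin (m*n))
    set idxO : Option (Fin (m*n)) → ℕ :=
      fun o => Option.elim o k (fun i => K + 1 + i.1) with hidxO
    set wO : Option (Fin (m*n)) → Fin D → ℝ := fun o => v (idxO o) with hwO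
    set gO : Option (Fin (m*n)) → Option (Fin (m*n)) := Option.map f with hgO
    set eO : Option (Fin (m*n)) → ℝ :=
      fun o => Option.elim o (-1 : ℝ) (fun _ => 1) with heO
    have hidx_none : idxO none = k := rfl
    have hidx_some : ∀ j : Fin (m*n), idxO (some j) = K + 1 + j.1 := fun j => rfl
    have hw_none : wO none = v k := rfl
    have hw_some : ∀ j : Fin (m*n), wO (some j) = v (K + 1 + j.1) := fun j => rfl
    have hg_none : gO none = none := rfl
    have hg_some : ∀ j : Fin (m*n), gO (some j) = some (f j) := fun j => rfl
    have he_none : eO none = -1 := rfl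
    have he_some : ∀ j : Fin (m*n), eO (some j) = 1 := fun j => rfl
    have hidx_le : ∀ o, idxO o ≤ K + m * n := by
      intro o
      cases o with
      | none => rw [hidx_none]; omega
      | some j => rw [hidx_some]; have := j.isLt; omega
    have hidx_inj : ∀ o o', idxO o = idxO o' → o = o' := by
      intro o o' h
      cases o with
      | none =>
        cases o' with
        | none => rfl
        | some j => rw [hidx_none, hidx_some] at h; omega
      | some j =>
        cases o' with
        | none => rw [hidx_none, hidx_some] at h; omega
        | some j' =>
          rw [hidx_some, hidx_some] at h
          congr 1
          exact Fin.ext (by omega)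
    have hwOrth : ∀ o o', wO o ⬝ᵥ wO o' = if o = o' then (1:ℝ) else 0 := by
      intro o o'
      have h2 : v (idxO o) ⬝ᵥ v (idxO o') = if idxO o = idxO o' then (1:ℝ) else 0 :=
        hortho (idxO o) (idxO o') (hidx_le o) (hidx_le o')
      rw [hwO]
      rw [h2]
      by_cases he : o = o'
      · subst he; simp
      · rw [if_neg he, if_neg (fun hc => he (hidx_inj _ _ hc))]
    have hgInv : Function.Involutive gO := by
      intro o
      cases o with
      | none => rfl
      | some j => rw [hg_some, hg_some, hfinv j]
    have hε1 : ∀ o, eO o * eO (gO o) = 1 := by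
      intro o
      cases o with
      | none => rw [hg_none, he_none]; norm_num
      | some j => rw [hg_some, he_some, he_some]; norm_num
    have hε2 : ∀ o, eO (gO o) = eO o := by
      intro o
      cases o with
      | none => rw [hg_none]
      | some j => rw [hg_some, he_some, he_some]
    have hRT : (reflMat wO gO eO)ᵀ = reflMat wO gO eO :=
      reflMat_transpose wO gO eO hgInv hε2
    have hRR : reflMat wO gO eO * reflMat wO gO eO = 1 :=
      reflMat_mul_self wO gO eO hwOrth hgInv hε1 hε2
    -- action of R
    have haction : ∀ z : Fin D → ℝ, (reflMat wO gO eO).mulVec z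
        = z + ((v k ⬝ᵥ z) • ((-1:ℝ) • v k - v k)
          + ∑ j : Fin (m*n), (v (K+1+j.1) ⬝ᵥ z) •
              ((1:ℝ) • v (K+1+(f j).1) - v (K+1+j.1))) := by
      intro z
      rw [reflMat_mulVec, Fintype.sum_option]
      rfl
    -- dot products with the data vectors
    have hvx : ∀ (a : ℕ) (i : Fin (m*n)), 3 ≤ a → a ≤ K + m*n →
        v a ⬝ᵥ x i = (if a = κ i then ρ i * φ (κ i) else 0)
          + (if a = K + 1 + i.1 then σξ else 0) := by
      intro a i ha3 haK
      have h00 : v a ⬝ᵥ x i = ∑ t, v a t * x i t := rfl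
      have h0 : (∑ t, v a t * x i t) = ∑ t, (v a t * v 0 t
          + (y i * φ 1) * (v a t * v 1 t)
          + (ysub i * φ 2 + μ) * (v a t * v 2 t)
          + (ρ i * φ (κ i)) * (v a t * v (κ i) t)
          + σξ * (v a t * v (K + 1 + i.1) t)) := by
        apply Finset.sum_congr rfl
        intro t _
        rw [hx i]
        ring
      rw [h00, h0]
      rw [Finset.sum_add_distrib, Finset.sum_add_distrib, Finset.sum_add_distrib,
        Finset.sum_add_distrib, ← Finset.mul_sum, ← Finset.mul_sum, ← Finset.mul_sum,
        ← Finset.mul_sum]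
      rw [hortho a 0 haK (by omega), hortho a 1 haK (by omega),
        hortho a 2 haK (by omega),
        hortho a (κ i) haK (by have := (hκ i).2; omega),
        hortho a (K + 1 + i.1) haK (by have := i.isLt; omega)]
      rw [if_neg (by omega : ¬ a = 0), if_neg (by omega : ¬ a = 1),
        if_neg (by omega : ¬ a = 2)]
      split_ifs <;> ring
    have hnoise : ∀ (j i : Fin (m*n)), v (K + 1 + j.1) ⬝ᵥ x i
        = if j = i then σξ else 0 := by
      intro j i
      rw [hvx (K + 1 + j.1) i (by omega) (by have := j.isLt; omega)]
      rw [if_neg (by have := (hκ i).2; omega : ¬ K + 1 + j.1 = κ i)]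
      by_cases hji : j = i
      · subst hji; simp
      · rw [if_neg (fun hc => hji (Fin.ext (by omega))), if_neg hji]
        simp
    have hvkx : ∀ i : Fin (m*n), v k ⬝ᵥ x i
        = if κ i = k then ρ i * φ (κ i) else 0 := by
      intro i
      rw [hvx k i hk3 (by omega)]
      rw [if_neg (by omega : ¬ k = K + 1 + i.1)]
      by_cases hik : κ i = k
      · rw [if_pos hik.symm, if_pos hik]; ring
      · rw [if_neg (fun hc => hik hc.symm), if_neg hik]; ring
    -- R maps data points to data points
    have hRx : ∀ i, (reflMat wO gO eO).mulVec (x i) = x (f i) := by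
      intro i
      rw [haction (x i), hvkx i]
      have hs : ∀ j : Fin (m*n),
          (v (K+1+j.1) ⬝ᵥ x i) • ((1:ℝ) • v (K+1+(f j).1) - v (K+1+j.1))
          = if j = i then σξ • ((1:ℝ) • v (K+1+(f j).1) - v (K+1+j.1)) else 0 := by
        intro j
        rw [hnoise j i]
        split_ifs <;> simp
      rw [Finset.sum_congr rfl fun j _ => hs j]
      rw [Finset.sum_ite_eq' Finset.univ i
        (fun j => σξ • ((1:ℝ) • v (K+1+(f j).1) - v (K+1+j.1)))]
      rw [if_pos (Finset.mem_univ i)]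
      by_cases hik : κ i = k
      · obtain ⟨hκf, hρf⟩ := hfκ i hik
        rw [if_pos hik, hx i, hx (f i)]
        funext t
        simp only [Pi.add_apply, Pi.smul_apply, Pi.sub_apply, smul_eq_mul]
        rw [hfy i, hfysub i, hκf, hρf, hik]
        ring
      · rw [if_neg hik, hfid i hik, hx i]
        funext t
        simp only [Pi.add_apply, Pi.smul_apply, Pi.sub_apply, smul_eq_mul]
        ring
    -- R fixes nothing relevant except flipping v k
    have hRvk : (reflMat wO gO eO).mulVec (v k) = -v k := by
      rw [haction (v k)]
      have h1 : v k ⬝ᵥ v k = 1 := by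
        have := hortho k k (by omega) (by omega)
        simpa [dotProduct] using this
      have h2 : ∀ j : Fin (m*n), v (K+1+j.1) ⬝ᵥ v k = 0 := by
        intro j
        have h3 := hortho (K+1+j.1) k (by have := j.isLt; omega) (by omega)
        rw [if_neg (by omega)] at h3
        exact h3
      rw [h1]
      rw [Finset.sum_congr rfl fun j _ => (by rw [h2 j, zero_smul] :
        (v (K+1+j.1) ⬝ᵥ v k) • ((1:ℝ) • v (K+1+(f j).1) - v (K+1+j.1)) = 0)]
      rw [Finset.sum_const_zero]
      funext t
      simp only [Pi.add_apply, Pi.smul_apply, Pi.sub_apply, Pi.neg_apply,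
        Pi.zero_apply, smul_eq_mul]
      ring
    -- R conjugation fixes M
    have hRM : reflMat wO gO eO * M * reflMat wO gO eO = M := by
      rw [hM, Matrix.mul_smul, Matrix.smul_mul]
      congr 1
      rw [Matrix.mul_sum, Matrix.sum_mul]
      have hterm : ∀ i, reflMat wO gO eO * vecMulVec (x i) (x i) * reflMat wO gO eO
          = vecMulVec (x (f i)) (x (f i)) := by
        intro i
        rw [conj_vmv', hRT, hRx]
      rw [Finset.sum_congr rfl fun i _ => hterm i]
      have := Equiv.sum_comp (hfinv.toPerm f)
        (fun j => vecMulVec (x j) (x j))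
      simpa [Function.Involutive.coe_toPerm] using this
    -- R fixes the class means
    have hRxbar : ∀ ε' : ℝ, (reflMat wO gO eO).mulVec (xbar ε') = xbar ε' := by
      intro ε'
      rw [hxbar ε', mulVec_smul]
      congr 1
      rw [mulVec_sum']
      have hterm : ∀ i, (reflMat wO gO eO).mulVec
          (Set.indicator {j : Fin (m*n) | y j = ε'} x i)
          = Set.indicator {j : Fin (m*n) | y j = ε'} (fun i' => x (f i')) i := by
        intro i
        by_cases hi : i ∈ {j : Fin (m*n) | y j = ε'}
        · rw [Set.indicator_of_mem hi, Set.indicator_of_mem hi, hRx]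
        · rw [Set.indicator_of_notMem hi, Set.indicator_of_notMem hi, mulVec_zero]
      rw [Finset.sum_congr rfl fun i _ => hterm i]
      have hre := Equiv.sum_comp (hfinv.toPerm f)
        (fun i => Set.indicator {j : Fin (m*n) | y j = ε'} (fun i' => x (f i')) i)
      rw [← hre]
      apply Finset.sum_congr rfl
      intro i _
      simp only [Function.Involutive.coe_toPerm]
      by_cases hi : i ∈ {j : Fin (m*n) | y j = ε'}
      · have hfi : f i ∈ {j : Fin (m*n) | y j = ε'} := by
          simp only [Set.mem_setOf_eq] at hi ⊢
          rw [hfy i]; exact hi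
        rw [Set.indicator_of_mem hfi, Set.indicator_of_mem hi, hfinv i]
      · have hfi : f i ∉ {j : Fin (m*n) | y j = ε'} := by
          simp only [Set.mem_setOf_eq] at hi ⊢
          rw [hfy i]; exact hi
        rw [Set.indicator_of_notMem hfi, Set.indicator_of_notMem hi]
    -- R conjugation fixes Md (uniqueness of pseudoinverse)
    have hRMd : reflMat wO gO eO * Md * reflMat wO gO eO = Md := by
      have h1 := pinv_conj M Md (reflMat wO gO eO) hMd hRR hRT
      rw [hRM] at h1
      exact pinv_unique M (reflMat wO gO eO * Md * reflMat wO gO eO) Md h1 hMd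
    -- conclude
    have hneg : v k ⬝ᵥ Md.mulVec (xbar ε) = -(v k ⬝ᵥ Md.mulVec (xbar ε)) := by
      conv_lhs => rw [← hRMd]
      rw [← Matrix.mulVec_mulVec, ← Matrix.mulVec_mulVec, hRxbar ε]
      rw [symdot (reflMat wO gO eO) hRT, hRvk, neg_dotProduct]
    linarith
  -- part 1
  have key2 : ∀ k, 3 ≤ k → k ≤ K → v k ⬝ᵥ (Md * Mp * Md).mulVec (v k) = 0 := by
    intro k hk3 hkK
    have hz : Mp.mulVec (Md.mulVec (v k)) = 0 := by
      rw [hMp, smul_mulVec, add_mulVec, vmv_mulVec, vmv_mulVec]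
      have hz1 : xbar 1 ⬝ᵥ Md.mulVec (v k) = 0 := by
        rw [symdot Md hMdsym, dotProduct_comm]
        exact key k hk3 hkK 1
      have hz2 : xbar (-1) ⬝ᵥ Md.mulVec (v k) = 0 := by
        rw [symdot Md hMdsym, dotProduct_comm]
        exact key k hk3 hkK (-1)
      rw [hz1, hz2]
      simp
    rw [← Matrix.mulVec_mulVec, ← Matrix.mulVec_mulVec, hz, mulVec_zero,
      dotProduct_zero]
  refine ⟨key2, ?_⟩
  intro q W hW k hk3 hkK
  have hsq : ∑ r, (W.mulVec (v k) r)^2 = 0 := by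
    have h1 : ∑ r, (W.mulVec (v k) r)^2 = v k ⬝ᵥ (Wᵀ * W).mulVec (v k) := by
      rw [← Matrix.mulVec_mulVec, dotProduct_mulVec, vecMul_transpose]
      simp [dotProduct, pow_two]
    rw [h1, hW]
    exact key2 k hk3 hkK
  funext r
  have h2 := (Finset.sum_eq_zero_iff_of_nonneg
    (fun r _ => sq_nonneg (W.mulVec (v k) r))).mp hsq r (Finset.mem_univ r)
  have h3 : W.mulVec (v k) r = 0 := by
    exact pow_eq_zero_iff (M₀ := ℝ) (n := 2) (by norm_num) |>.mp h2
  simpa using h3
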